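/- Let f, g : ℝⁿ → ℝ ∪ {∞} be proper, lower semicontinuous, and convex, and suppose Prox_f = k · Prox_g for some 0 < k < 1 (as single-valued maps on ℝⁿ). Then f is strongly convex. -/

import Mathlib

open Filter Topology

/-- The Moreau envelope with parameter 1 of an extended-real-valued function. -/
noncomputable def moreauEnv {n : ℕ} (f : EuclideanSpace ℝ (Fin n) → EReal) :
    EuclideanSpace ℝ (Fin n) → EReal :=
  fun x => ⨅ y, f y + (((1 / 2 : ℝ) * ‖y - x‖ ^ 2 : ℝ) : EReal)

/-- `f` is proper: nowhere `-∞` and somewhere finite. -/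
def ProperFn {n : ℕ} (f : EuclideanSpace ℝ (Fin n) → EReal) : Prop :=
  (∀ x, f x ≠ ⊥) ∧ ∃ x, f x ≠ ⊤

/-- Convexity for extended-real-valued functions. -/
def ConvexFn {n : ℕ} (f : EuclideanSpace ℝ (Fin n) → EReal) : Prop :=
  ∀ x y : EuclideanSpace ℝ (Fin n), ∀ a b : ℝ, 0 ≤ a → 0 ≤ b → a + b = 1 →
    f (a • x + b • y) ≤ (a : EReal) * f x + (b : EReal) * f y

/-- `f` is strongly convex: `f - (σ/2)‖·‖²` is convex for some `σ > 0`. -/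
def StronglyConvexFn {n : ℕ} (f : EuclideanSpace ℝ (Fin n) → EReal) : Prop :=
  ∃ σ : ℝ, 0 < σ ∧ ConvexFn (fun x => f x - ((σ / 2 * ‖x‖ ^ 2 : ℝ) : EReal))

/-- `f` is (super)coercive: `liminf f(x)/‖x‖ = ∞` as `‖x‖ → ∞`, phrased as:
for every slope `c`, eventually (as `‖x‖ → ∞`) `f x ≥ c‖x‖`. -/
def CoerciveFn {n : ℕ} (f : EuclideanSpace ℝ (Fin n) → EReal) : Prop :=
  ∀ c : ℝ, ∀ᶠ x : EuclideanSpace ℝ (Fin n) in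
    Filter.comap (fun x => ‖x‖) Filter.atTop, ((c * ‖x‖ : ℝ) : EReal) ≤ f x

/-- `f` attains a strong minimum at `x̄`: `x̄` is a global minimizer and every
minimizing sequence converges to `x̄`. -/
def StrongMinAt {n : ℕ} (f : EuclideanSpace ℝ (Fin n) → EReal)
    (xbar : EuclideanSpace ℝ (Fin n)) : Prop :=
  (∀ x, f xbar ≤ f x) ∧
    ∀ u : ℕ → EuclideanSpace ℝ (Fin n),
      Tendsto (fun k => f (u k)) atTop (nhds (f xbar)) → Tendsto u atTop (nhds xbar)

/-- `p` is the proximal mapping of `f`: `p x` minimizes `y ↦ f y + ½‖y-x‖²`. -/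
def IsProxMap {n : ℕ} (f : EuclideanSpace ℝ (Fin n) → EReal)
    (p : EuclideanSpace ℝ (Fin n) → EuclideanSpace ℝ (Fin n)) : Prop :=
  ∀ x y, f (p x) + (((1 / 2 : ℝ) * ‖p x - x‖ ^ 2 : ℝ) : EReal) ≤
    f y + (((1 / 2 : ℝ) * ‖y - x‖ ^ 2 : ℝ) : EReal)

section SCauxiliary
open RealInnerProductSpace

def ConvexFn' {n : ℕ} (f : EuclideanSpace ℝ (Fin n) → EReal) : Prop :=
  ∀ x y : EuclideanSpace ℝ (Fin n), ∀ a b : ℝ, 0 ≤ a → 0 ≤ b → a + b = 1 →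
    f (a • x + b • y) ≤ (a : EReal) * f x + (b : EReal) * f y

/-- Existence of an affine minorant separating below the value at a point. -/
lemma SCaux_exists_affine_minorant {n : ℕ} {f : EuclideanSpace ℝ (Fin n) → EReal}
    (hbot : ∀ x, f x ≠ ⊥) (hlsc : LowerSemicontinuous f) (hc : ConvexFn' f)
    {m : EuclideanSpace ℝ (Fin n)} (hm : f m ≠ ⊤) {r : ℝ} (hr : (r : EReal) < f m) :
    ∃ (s₀ : EuclideanSpace ℝ (Fin n)) (α : ℝ),
      (∀ w, ((α + ⟪s₀, w⟫ : ℝ) : EReal) ≤ f w) ∧ r < α + ⟪s₀, m⟫ := by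
  classical
  set S : Set ((EuclideanSpace ℝ (Fin n)) × ℝ) := {p | f p.1 ≤ (p.2 : EReal)} with hS
  have hSclosed : IsClosed S := by
    rw [← isOpen_compl_iff]
    rw [isOpen_iff_mem_nhds]
    intro p hp
    have hp' : (p.2 : EReal) < f p.1 := not_le.1 hp
    obtain ⟨c, hc1, hc2⟩ := EReal.exists_between_coe_real hp'
    have hev : ∀ᶠ x in 𝓝 p.1, (c : EReal) < f x := hlsc p.1 c hc2
    obtain ⟨U, hUsub, hUopen, hpU⟩ := eventually_nhds_iff.1 hev
    have hmem : U ×ˢ Set.Iio c ∈ 𝓝 p :=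
      prod_mem_nhds (hUopen.mem_nhds hpU) (Iio_mem_nhds (by exact_mod_cast hc1))
    refine Filter.mem_of_superset hmem ?_
    rintro ⟨q1, q2⟩ ⟨h1, h2⟩
    simp only [Set.mem_compl_iff, hS, Set.mem_setOf_eq, not_le]
    exact lt_trans (by exact_mod_cast h2) (hUsub q1 h1)
  have hSconvex : Convex ℝ S := by
    rintro ⟨p1, p2⟩ hp ⟨q1, q2⟩ hq a b ha hb hab
    simp only [hS, Set.mem_setOf_eq] at hp hq ⊢
    have hp_ne_top : f p1 ≠ ⊤ := fun h => by simp [h] at hp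
    have hq_ne_top : f q1 ≠ ⊤ := fun h => by simp [h] at hq
    have hp_eq : f p1 = ((f p1).toReal : EReal) := (EReal.coe_toReal hp_ne_top (hbot p1)).symm
    have hq_eq : f q1 = ((f q1).toReal : EReal) := (EReal.coe_toReal hq_ne_top (hbot q1)).symm
    have hp' : (f p1).toReal ≤ p2 := by rw [hp_eq] at hp; exact_mod_cast hp
    have hq' : (f q1).toReal ≤ q2 := by rw [hq_eq] at hq; exact_mod_cast hq
    have h1 : f (a • p1 + b • q1) ≤ (a : EReal) * f p1 + (b : EReal) * f q1 :=
      hc p1 q1 a b ha hb hab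
    have h2 : (a : EReal) * f p1 + (b : EReal) * f q1
        = ((a * (f p1).toReal + b * (f q1).toReal : ℝ) : EReal) := by
      rw [hp_eq, hq_eq, ← EReal.coe_mul, ← EReal.coe_mul, ← EReal.coe_add]
      simp [EReal.toReal_coe]
    have h3 : (a * (f p1).toReal + b * (f q1).toReal : ℝ) ≤ a * p2 + b * q2 := by
      have := mul_le_mul_of_nonneg_left hp' ha
      have := mul_le_mul_of_nonneg_left hq' hb
      linarith
    calc f ((a • (p1, p2) + b • (q1, q2)).1) = f (a • p1 + b • q1) := rfl
      _ ≤ ((a * (f p1).toReal + b * (f q1).toReal : ℝ) : EReal) := by rw [← h2]; exact h1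
      _ ≤ (((a • (p1, p2) + b • (q1, q2)).2 : ℝ) : EReal) := by
          simp only [Prod.smul_mk, Prod.mk_add_mk, smul_eq_mul]
          exact_mod_cast h3
  have hnotmem : ((m, r) : (EuclideanSpace ℝ (Fin n)) × ℝ) ∉ S := by
    simp only [hS, Set.mem_setOf_eq, not_le]; exact hr
  obtain ⟨φ, u, hφx, hφS⟩ := geometric_hahn_banach_point_closed hSconvex hSclosed hnotmem
  set β : ℝ := φ (0, 1) with hβ
  have hsplit : ∀ (w : EuclideanSpace ℝ (Fin n)) (t : ℝ), φ (w, t) = φ (w, 0) + t * β := by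
    intro w t
    have : ((w, t) : (EuclideanSpace ℝ (Fin n)) × ℝ) = (w, 0) + t • (0, 1) := by
      simp [Prod.ext_iff]
    rw [this, map_add, map_smul, smul_eq_mul]
  set rm : ℝ := (f m).toReal with hrm
  have hfm_eq : f m = ((rm : ℝ) : EReal) := (EReal.coe_toReal hm (hbot m)).symm
  have hmm : ((m, rm) : (EuclideanSpace ℝ (Fin n)) × ℝ) ∈ S := by
    simp only [hS, Set.mem_setOf_eq]; rw [hfm_eq]
  have h1 : u < φ (m, 0) + rm * β := by rw [← hsplit]; exact hφS _ hmm
  have h2 : φ (m, 0) + r * β < u := by rw [← hsplit]; exact hφx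
  have hβpos : 0 < β := by
    by_contra hβn
    push_neg at hβn
    rcases eq_or_lt_of_le hβn with heq | hlt
    · rw [heq] at h1 h2; simp at h1 h2; linarith
    · set T : ℝ := max rm ((u - φ (m, 0)) / β) with hT
      have hT1 : rm ≤ T := le_max_left _ _
      have hTS : ((m, T) : (EuclideanSpace ℝ (Fin n)) × ℝ) ∈ S := by
        simp only [hS, Set.mem_setOf_eq]; rw [hfm_eq]; exact_mod_cast hT1
      have h3 : u < φ (m, 0) + T * β := by rw [← hsplit]; exact hφS _ hTS
      have hT2 : (u - φ (m, 0)) / β ≤ T := le_max_right _ _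
      have : T * β ≤ ((u - φ (m, 0)) / β) * β := by
        exact mul_le_mul_of_nonpos_right hT2 (le_of_lt hlt)
      rw [div_mul_cancel₀ _ (ne_of_lt hlt)] at this
      linarith
  set ψ' : EuclideanSpace ℝ (Fin n) →L[ℝ] ℝ := φ.comp (ContinuousLinearMap.inl ℝ _ ℝ) with hψ'
  have hψ'app : ∀ w, ψ' w = φ (w, 0) := fun w => rfl
  set s₀ : EuclideanSpace ℝ (Fin n) :=
    (-(1 / β)) • (InnerProductSpace.toDual ℝ _).symm ψ' with hs₀
  have hinner : ∀ w, ⟪s₀, w⟫ = -(1 / β) * φ (w, 0) := by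
    intro w
    rw [hs₀, real_inner_smul_left, InnerProductSpace.toDual_symm_apply]
    rfl
  refine ⟨s₀, u / β, ?_, ?_⟩
  · intro w
    by_cases hw : f w = ⊤
    · rw [hw]; exact le_top
    · have hw_eq : f w = ((f w).toReal : EReal) := (EReal.coe_toReal hw (hbot w)).symm
      have hwS : ((w, (f w).toReal) : (EuclideanSpace ℝ (Fin n)) × ℝ) ∈ S := by
        simp only [hS, Set.mem_setOf_eq]; exact hw_eq.le
      have h4 : u < φ (w, 0) + (f w).toReal * β := by rw [← hsplit]; exact hφS _ hwS
      have : u / β + ⟪s₀, w⟫ ≤ (f w).toReal := by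
        rw [hinner]
        have hle : (u - φ (w, 0)) / β ≤ (f w).toReal := (div_le_iff₀ hβpos).2 (by nlinarith)
        calc u / β + -(1 / β) * φ (w, 0) = (u - φ (w, 0)) / β := by ring
          _ ≤ (f w).toReal := hle
      calc ((u / β + ⟪s₀, w⟫ : ℝ) : EReal) ≤ (((f w).toReal : ℝ) : EReal) := EReal.coe_le_coe_iff.2 this
        _ = f w := EReal.coe_toReal hw (hbot w)
  · rw [hinner]
    have hlt : r < (u - φ (m, 0)) / β := (lt_div_iff₀ hβpos).2 (by nlinarith)
    calc r < (u - φ (m, 0)) / β := hlt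
      _ = u / β + -(1 / β) * φ (m, 0) := by ring

lemma SCaux_combo {H : Type*} [NormedAddCommGroup H] [InnerProductSpace ℝ H]
    (x y p : H) (a b : ℝ) (hab : a + b = 1) :
    a * ‖x - p‖^2 + b * ‖y - p‖^2 = ‖(a • x + b • y) - p‖^2 + a * b * ‖x - y‖^2 := by
  have hb : b = 1 - a := by linarith
  subst hb
  have hp : (a • x + (1 - a) • y) - p = a • (x - p) + (1 - a) • (y - p) := by
    module
  rw [hp]
  simp only [← real_inner_self_eq_norm_sq, inner_add_left, inner_add_right, inner_sub_left,
    inner_sub_right, real_inner_smul_left, real_inner_smul_right]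
  ring

lemma SCaux_chain {H : Type*} [NormedAddCommGroup H] [InnerProductSpace ℝ H]
    (Φ : H → ℝ) (v : H → H) (μ : ℝ) (hμ : 0 ≤ μ)
    (hub : ∀ x y, Φ y ≤ Φ x + ⟪v x, y - x⟫ + ‖y - x‖^2 / 2)
    (hmono : ∀ x y, μ * ‖x - y‖^2 ≤ ⟪v x - v y, x - y⟫) (x y : H) :
    Φ x + ⟪v x, y - x⟫ + μ / 2 * ‖y - x‖^2 ≤ Φ y := by
  have key : ∀ N : ℕ, Φ x + ⟪v x, y - x⟫ + μ / 2 * ‖y - x‖^2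
      - ‖y - x‖^2 / (2 * (N + 1)) ≤ Φ y := by
    intro N
    set n : ℕ := N + 1 with hn'
    have hn : (0:ℝ) < (n:ℝ) := by positivity
    set d : H := ((n:ℝ))⁻¹ • (y - x) with hd
    have claim : ∀ j : ℕ, j ≤ n →
        Φ x + j * ⟪v x, d⟫ + μ * ‖d‖^2 * (j * (j+1) / 2) - j * (‖d‖^2 / 2)
          ≤ Φ (x + (j:ℝ) • d) := by
      intro j
      induction j with
      | zero => intro _; simp
      | succ i ih =>
        intro hle
        have hi := ih (Nat.le_of_succ_le hle)
        set xi := x + (i:ℝ) • d with hxi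
        set xj := x + ((i+1:ℕ):ℝ) • d with hxj
        have hdiff : xi - xj = -d := by
          rw [hxi, hxj]; push_cast; rw [add_smul, one_smul]; abel
        have hdiff2 : xj - x = ((i:ℝ)+1) • d := by
          rw [hxj]; push_cast; abel
        have hstep : Φ xi ≤ Φ xj + ⟪v xj, xi - xj⟫ + ‖xi - xj‖^2 / 2 := hub xj xi
        rw [hdiff] at hstep
        have hmono' := hmono xj x
        rw [hdiff2] at hmono'
        have hc : (0:ℝ) ≤ (i:ℝ) + 1 := by positivity
        have hnorm : ‖((i:ℝ)+1) • d‖^2 = ((i:ℝ)+1)^2 * ‖d‖^2 := by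
          rw [norm_smul, mul_pow, Real.norm_eq_abs, sq_abs]
        have hinner2 : ⟪v xj - v x, ((i:ℝ)+1) • d⟫
            = ((i:ℝ)+1) * (⟪v xj, d⟫ - ⟪v x, d⟫) := by
          rw [real_inner_smul_right, inner_sub_left]
        rw [hnorm, hinner2] at hmono'
        have hvj : ⟪v x, d⟫ + μ * (((i:ℝ)+1)) * ‖d‖^2 ≤ ⟪v xj, d⟫ := by
          nlinarith [hmono']
        have hneg : ⟪v xj, -d⟫ = -⟪v xj, d⟫ := by rw [inner_neg_right]
        rw [hneg] at hstep
        have hnd : ‖(-d : H)‖^2 = ‖d‖^2 := by rw [norm_neg]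
        rw [hnd] at hstep
        -- target
        push_cast
        push_cast at hi hstep
        nlinarith [hi, hstep, hvj, sq_nonneg ‖d‖]
    have hfin := claim n le_rfl
    have hyd : x + (n:ℝ) • d = y := by
      rw [hd, smul_smul, mul_inv_cancel₀ hn.ne', one_smul]; abel
    rw [hyd] at hfin
    have hnd : ‖d‖^2 = ‖y - x‖^2 / (n:ℝ)^2 := by
      rw [hd, norm_smul, mul_pow, Real.norm_eq_abs, sq_abs]
      field_simp
    have hndot : (n:ℝ) * ⟪v x, d⟫ = ⟪v x, y - x⟫ := by
      rw [hd, real_inner_smul_right]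
      field_simp
    have hn1 : ((N:ℝ) + 1) = (n:ℝ) := by rw [hn']; push_cast; ring
    have e1 : μ * ‖d‖^2 * ((n:ℝ) * ((n:ℝ) + 1) / 2)
        = μ * ‖y - x‖^2 / 2 + μ * ‖y - x‖^2 / (2 * (n:ℝ)) := by
      rw [hnd]; field_simp
    have e2 : (n:ℝ) * (‖d‖^2 / 2) = ‖y - x‖^2 / (2 * (n:ℝ)) := by
      rw [hnd]; field_simp
    rw [e1, e2, hndot] at hfin
    rw [hn1]
    have hpos2 : 0 ≤ μ * ‖y - x‖^2 / (2 * (n:ℝ)) := by positivity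
    linarith [hfin]
  by_contra hcon
  push_neg at hcon
  set δ : ℝ := Φ x + ⟪v x, y - x⟫ + μ / 2 * ‖y - x‖^2 - Φ y with hδ
  have hδpos : 0 < δ := by rw [hδ]; linarith
  obtain ⟨N, hN⟩ := exists_nat_gt (‖y - x‖^2 / (2 * δ))
  have := key N
  have hNpos : (0:ℝ) < 2 * ((N:ℝ) + 1) := by positivity
  have hle : δ ≤ ‖y - x‖^2 / (2 * ((N:ℝ) + 1)) := by
    rw [hδ]; linarith [key N]
  have h3 : δ * (2 * ((N:ℝ) + 1)) ≤ ‖y - x‖^2 := by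
    rw [le_div_iff₀ hNpos] at hle; exact hle
  have h4 : ‖y - x‖^2 < 2 * δ * (N:ℝ) := by
    rw [div_lt_iff₀ (by positivity : (0:ℝ) < 2 * δ)] at hN; linarith [hN]
  nlinarith [hδpos]

lemma SCaux_mul_ne_bot (b : ℝ) (hb : 0 < b) (w : EReal) (hw : w ≠ ⊥) : (b : EReal) * w ≠ ⊥ := by
  induction w using EReal.rec with
  | bot => exact absurd rfl hw
  | coe r => rw [← EReal.coe_mul]; exact EReal.coe_ne_bot _
  | top => rw [EReal.coe_mul_top_of_pos hb]; simp

lemma SCaux_sub_coe_ne_bot (x : EReal) (hx : x ≠ ⊥) (c : ℝ) : x - (c : EReal) ≠ ⊥ := by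
  induction x using EReal.rec with
  | bot => exact absurd rfl hx
  | coe r => rw [← EReal.coe_sub]; exact EReal.coe_ne_bot _
  | top => rw [EReal.top_sub_coe]; simp

lemma SCaux_coeff (k : ℝ) (h : k ≠ 0) :
    (1 - k)/2 * (1/k)^2 - (1 - 1/k)^2/2 = ((1 - k)/k)/2 := by
  field_simp
  ring

set_option maxHeartbeats 3000000 in
theorem stronglyConvex_of_prox_scaled' {n : ℕ}
    (f g : EuclideanSpace ℝ (Fin n) → EReal)
    (hfp : (∀ x, f x ≠ ⊥) ∧ ∃ x, f x ≠ ⊤) (hflsc : LowerSemicontinuous f)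
    (hfc : ∀ x y : EuclideanSpace ℝ (Fin n), ∀ a b : ℝ, 0 ≤ a → 0 ≤ b → a + b = 1 →
      f (a • x + b • y) ≤ (a : EReal) * f x + (b : EReal) * f y)
    (hgp : (∀ x, g x ≠ ⊥) ∧ ∃ x, g x ≠ ⊤) (hglsc : LowerSemicontinuous g)
    (hgc : ∀ x y : EuclideanSpace ℝ (Fin n), ∀ a b : ℝ, 0 ≤ a → 0 ≤ b → a + b = 1 →
      g (a • x + b • y) ≤ (a : EReal) * g x + (b : EReal) * g y)
    (proxF proxG : EuclideanSpace ℝ (Fin n) → EuclideanSpace ℝ (Fin n))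
    (hproxF : ∀ x y, f (proxF x) + (((1 / 2 : ℝ) * ‖proxF x - x‖ ^ 2 : ℝ) : EReal) ≤
      f y + (((1 / 2 : ℝ) * ‖y - x‖ ^ 2 : ℝ) : EReal))
    (hproxG : ∀ x y, g (proxG x) + (((1 / 2 : ℝ) * ‖proxG x - x‖ ^ 2 : ℝ) : EReal) ≤
      g y + (((1 / 2 : ℝ) * ‖y - x‖ ^ 2 : ℝ) : EReal))
    (k : ℝ) (hk0 : 0 < k) (hk1 : k < 1)
    (hEq : ∀ x, proxF x = k • proxG x) :
    ∃ σ : ℝ, 0 < σ ∧ ∀ x y : EuclideanSpace ℝ (Fin n), ∀ a b : ℝ, 0 ≤ a → 0 ≤ b → a + b = 1 →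
      (f (a • x + b • y) - ((σ / 2 * ‖a • x + b • y‖ ^ 2 : ℝ) : EReal)) ≤
        (a : EReal) * (f x - ((σ / 2 * ‖x‖ ^ 2 : ℝ) : EReal)) +
        (b : EReal) * (f y - ((σ / 2 * ‖y‖ ^ 2 : ℝ) : EReal)) := by
  have hkne : k ≠ 0 := ne_of_gt hk0
  obtain ⟨hfbot, yf, hyf⟩ := hfp
  obtain ⟨hgbot, yg, hyg⟩ := hgp
  -- finiteness at prox points
  have hf_netop : ∀ x, f (proxF x) ≠ ⊤ := by
    intro x h
    have h2 := hproxF x yf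
    rw [h, EReal.top_add_of_ne_bot (EReal.coe_ne_bot _)] at h2
    exact absurd h2 (not_le.2 (EReal.add_lt_top hyf (EReal.coe_ne_top _)))
  have hg_netop : ∀ x, g (proxG x) ≠ ⊤ := by
    intro x h
    have h2 := hproxG x yg
    rw [h, EReal.top_add_of_ne_bot (EReal.coe_ne_bot _)] at h2
    exact absurd h2 (not_le.2 (EReal.add_lt_top hyg (EReal.coe_ne_top _)))
  have hFR : ∀ x, f (proxF x) = (((f (proxF x)).toReal : ℝ) : EReal) :=
    fun x => (EReal.coe_toReal (hf_netop x) (hfbot _)).symm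
  have hGR : ∀ x, g (proxG x) = (((g (proxG x)).toReal : ℝ) : EReal) :=
    fun x => (EReal.coe_toReal (hg_netop x) (hgbot _)).symm
  -- real prox inequalities
  have hproxF_real : ∀ x c, f c ≠ ⊤ →
      (f (proxF x)).toReal + ‖proxF x - x‖^2 / 2 ≤ (f c).toReal + ‖c - x‖^2 / 2 := by
    intro x c hc
    have h2 := hproxF x c
    have hc_eq : f c = (((f c).toReal : ℝ) : EReal) := (EReal.coe_toReal hc (hfbot c)).symm
    rw [hFR x, hc_eq, ← EReal.coe_add, ← EReal.coe_add, EReal.coe_le_coe_iff] at h2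
    linarith
  have hproxG_real : ∀ x c, g c ≠ ⊤ →
      (g (proxG x)).toReal + ‖proxG x - x‖^2 / 2 ≤ (g c).toReal + ‖c - x‖^2 / 2 := by
    intro x c hc
    have h2 := hproxG x c
    have hc_eq : g c = (((g c).toReal : ℝ) : EReal) := (EReal.coe_toReal hc (hgbot c)).symm
    rw [hGR x, hc_eq, ← EReal.coe_add, ← EReal.coe_add, EReal.coe_le_coe_iff] at h2
    linarith
  -- subgradient inequality for g between prox points
  have hGsub : ∀ x y, (g (proxG x)).toReal + ⟪x - proxG x, proxG y - proxG x⟫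
      ≤ (g (proxG y)).toReal := by
    intro x y
    set p := proxG x with hp
    set q := proxG y with hq2
    have key : ∀ t : ℝ, 0 < t → t ≤ 1 →
        (g p).toReal + ⟪x - p, q - p⟫ ≤ (g q).toReal + t * (‖q - p‖^2 / 2) := by
      intro t ht0 ht1
      set yt := p + t • (q - p) with hyt
      have hyt' : yt = (1 - t) • p + t • q := by rw [hyt]; module
      have hgpeq : g p = (((g p).toReal : ℝ) : EReal) := hGR x
      have hgqeq : g q = (((g q).toReal : ℝ) : EReal) := hGR y
      have hcv : g yt ≤ (((1 - t) * (g p).toReal + t * (g q).toReal : ℝ) : EReal) := by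
        calc g yt = g ((1 - t) • p + t • q) := by rw [hyt']
          _ ≤ ((1 - t : ℝ) : EReal) * g p + ((t : ℝ) : EReal) * g q :=
              hgc p q (1 - t) t (by linarith) ht0.le (by ring)
          _ = _ := by
              rw [hgpeq, hgqeq, ← EReal.coe_mul, ← EReal.coe_mul, ← EReal.coe_add]
              simp [EReal.toReal_coe]
      have hyt_ne_top : g yt ≠ ⊤ := (lt_of_le_of_lt hcv (EReal.coe_lt_top _)).ne
      have hyt_eq : g yt = (((g yt).toReal : ℝ) : EReal) :=
        (EReal.coe_toReal hyt_ne_top (hgbot _)).symm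
      have hcv' : (g yt).toReal ≤ (1 - t) * (g p).toReal + t * (g q).toReal := by
        rw [hyt_eq] at hcv
        exact EReal.coe_le_coe_iff.1 hcv
      have hprox := hproxG_real x yt hyt_ne_top
      have hytx : yt - x = (p - x) + t • (q - p) := by rw [hyt]; abel
      have hexp : ‖yt - x‖^2 = ‖p - x‖^2 + 2 * (t * ⟪p - x, q - p⟫) + t^2 * ‖q - p‖^2 := by
        rw [hytx, norm_add_sq_real, real_inner_smul_right, norm_smul, Real.norm_eq_abs,
          mul_pow, sq_abs]
        try ring
      have hinner_pm : ⟪p - x, q - p⟫ = -⟪x - p, q - p⟫ := by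
        have h1 : p - x = -(x - p) := by abel
        rw [h1, inner_neg_left]
      have hmul : t * ((g p).toReal + ⟪x - p, q - p⟫)
          ≤ t * ((g q).toReal + t * (‖q - p‖^2 / 2)) := by nlinarith [hcv', hprox, hexp]
      exact le_of_mul_le_mul_left hmul ht0
    by_contra hcon
    push_neg at hcon
    set δ : ℝ := (g p).toReal + ⟪x - p, q - p⟫ - (g q).toReal with hδ
    have hδpos : 0 < δ := by rw [hδ]; linarith
    set t0 : ℝ := min 1 (δ / (‖q - p‖^2 + 1)) with ht0def
    have hqp1 : (0:ℝ) < ‖q - p‖^2 + 1 := by positivity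
    have ht00 : 0 < t0 := lt_min one_pos (div_pos hδpos hqp1)
    have ht01 : t0 ≤ 1 := min_le_left _ _
    have hk2 := key t0 ht00 ht01
    have ht0le : t0 ≤ δ / (‖q - p‖^2 + 1) := min_le_right _ _
    have hlast : t0 * (‖q - p‖^2 / 2) < δ := by
      have h1 : t0 * (‖q - p‖^2 / 2) ≤ (δ / (‖q - p‖^2 + 1)) * (‖q - p‖^2 / 2) :=
        mul_le_mul_of_nonneg_right ht0le (by positivity)
      have h2 : (δ / (‖q - p‖^2 + 1)) * (‖q - p‖^2 / 2) < δ := by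
        rw [div_mul_eq_mul_div, div_lt_iff₀ hqp1]
        nlinarith [hδpos, sq_nonneg ‖q - p‖]
      linarith
    linarith
  -- firm nonexpansiveness of proxG
  have hGfirm : ∀ x y, ‖proxG x - proxG y‖^2 ≤ ⟪x - y, proxG x - proxG y⟫ := by
    intro x y
    have h1 := hGsub x y
    have h2 := hGsub y x
    have e : ⟪x - y, proxG x - proxG y⟫ - ‖proxG x - proxG y‖^2
        = -⟪x - proxG x, proxG y - proxG x⟫ - ⟪y - proxG y, proxG x - proxG y⟫ := by
      simp only [← real_inner_self_eq_norm_sq, inner_sub_left, inner_sub_right]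
      ring
    linarith
  have hGlip : ∀ x y, ‖proxG x - proxG y‖ ≤ ‖x - y‖ := by
    intro x y
    have h := hGfirm x y
    have hcs := real_inner_le_norm (x - y) (proxG x - proxG y)
    nlinarith [norm_nonneg (proxG x - proxG y), norm_nonneg (x - y)]
  -- strong monotonicity of v = id - proxF
  set μ : ℝ := 1 - k with hμdef
  clear_value μ
  have hμpos : 0 < μ := by rw [hμdef]; linarith
  set v : EuclideanSpace ℝ (Fin n) → EuclideanSpace ℝ (Fin n) :=
    fun x => x - proxF x with hvdef
  clear_value v
  have hVmono : ∀ x y, μ * ‖x - y‖^2 ≤ ⟪v x - v y, x - y⟫ := by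
    intro x y
    have hv : v x - v y = (x - y) - k • (proxG x - proxG y) := by
      simp only [hvdef, hEq x, hEq y]
      rw [smul_sub]; abel
    rw [hv, inner_sub_left, real_inner_smul_left]
    have h1 : ⟪proxG x - proxG y, x - y⟫ ≤ ‖x - y‖^2 := by
      have hcs := real_inner_le_norm (proxG x - proxG y) (x - y)
      have hl := hGlip x y
      nlinarith [norm_nonneg (x - y), norm_nonneg (proxG x - proxG y)]
    have h2 : ⟪x - y, x - y⟫ = ‖x - y‖^2 := real_inner_self_eq_norm_sq _
    have h3 := mul_le_mul_of_nonneg_left h1 hk0.le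
    rw [hμdef]
    linarith
  -- Moreau envelope
  set EN : EuclideanSpace ℝ (Fin n) → ℝ :=
    fun x => (f (proxF x)).toReal + ‖proxF x - x‖^2 / 2 with hENdef
  clear_value EN
  have hub : ∀ x y, EN y ≤ EN x + ⟪v x, y - x⟫ + ‖y - x‖^2 / 2 := by
    intro x y
    have h := hproxF_real y (proxF x) (hf_netop x)
    have hexp : ‖proxF x - y‖^2 = ‖proxF x - x‖^2 + 2 * ⟪proxF x - x, x - y⟫ + ‖x - y‖^2 := by
      have hh : proxF x - y = (proxF x - x) + (x - y) := by abel
      rw [hh, norm_add_sq_real]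
    have hvv : ⟪proxF x - x, x - y⟫ = ⟪v x, y - x⟫ := by
      have h1 : proxF x - x = -(v x) := by rw [hvdef]; simp only [neg_sub]
      have h2 : x - y = -(y - x) := by abel
      rw [h1, h2, inner_neg_neg]
    have hnn : ‖x - y‖ = ‖y - x‖ := norm_sub_rev _ _
    simp only [hENdef]
    rw [← hvv]
    rw [hnn] at hexp
    linarith [h, hexp]
  have hchain := SCaux_chain EN v μ hμpos.le hub hVmono
  -- strong subgradient inequality at prox points
  set σ : ℝ := (1 - k) / k with hσdef
  clear_value σ
  have hσpos : 0 < σ := by rw [hσdef]; exact div_pos (by linarith) hk0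
  have hsub : ∀ w c, f c ≠ ⊤ →
      (f (proxF w)).toReal + ⟪w - proxF w, c - proxF w⟫ + σ / 2 * ‖c - proxF w‖^2
        ≤ (f c).toReal := by
    intro w c hc
    set p := proxF w with hpdef
    set d := c - p with hddef
    set z := w + (1 / k) • d with hzdef
    clear_value p d z
    have h1 : EN z ≤ (f c).toReal + ‖c - z‖^2 / 2 := by
      have hh := hproxF_real z c hc
      simp only [hENdef]
      linarith
    have h2 := hchain w z
    have hzw : z - w = (1 / k) • d := by rw [hzdef]; abel
    have hcz : c - z = (1 - 1 / k) • d - (w - p) := by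
      rw [hzdef, hddef]; module
    have e1 : ⟪v w, z - w⟫ = (1 / k) * ⟪w - p, d⟫ := by
      rw [hzw, real_inner_smul_right]
      simp only [hvdef, hpdef]
    have e2 : ‖z - w‖^2 = (1 / k)^2 * ‖d‖^2 := by
      rw [hzw, norm_smul, mul_pow, Real.norm_eq_abs, sq_abs]
    have e3 : ‖c - z‖^2 = (1 - 1/k)^2 * ‖d‖^2 - 2 * ((1 - 1/k) * ⟪d, w - p⟫) + ‖w - p‖^2 := by
      rw [hcz, norm_sub_sq_real, real_inner_smul_left, norm_smul, Real.norm_eq_abs, mul_pow,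
        sq_abs]
      try ring
    have esym : ⟪d, w - p⟫ = ⟪w - p, d⟫ := real_inner_comm _ _
    have hENw : EN w = (f p).toReal + ‖w - p‖^2 / 2 := by
      simp only [hENdef, ← hpdef]; rw [norm_sub_rev]
    have hcomb : (f p).toReal + ‖w - p‖^2/2 + (1/k) * ⟪w - p, d⟫ + μ/2 * ((1/k)^2 * ‖d‖^2)
        ≤ (f c).toReal + ((1 - 1/k)^2 * ‖d‖^2 - 2*((1 - 1/k) * ⟪w - p, d⟫) + ‖w - p‖^2)/2 := by
      rw [e1, e2] at h2
      rw [e3, esym] at h1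
      rw [hENw] at h2
      linarith
    have heqA : (1/k) * ⟪w - p, d⟫ + (1 - 1/k) * ⟪w - p, d⟫ = ⟪w - p, d⟫ := by ring
    have hco : μ/2 * (1/k)^2 - (1 - 1/k)^2/2 = σ/2 := by
      rw [hμdef, hσdef]; exact SCaux_coeff k hkne
    have heqB : μ/2 * ((1/k)^2 * ‖d‖^2) - (1 - 1/k)^2 * ‖d‖^2 / 2 = σ/2 * ‖d‖^2 := by
      linear_combination ‖d‖^2 * hco
    linarith only [hcomb, heqA, heqB]
  -- main result
  refine ⟨σ, hσpos, ?_⟩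
  intro x y a b ha hb hab
  by_cases hax : a = 0
  · have hb1 : b = 1 := by linarith
    subst hax hb1
    simp only [EReal.coe_zero, zero_mul, EReal.coe_one, one_mul, zero_smul, one_smul, zero_add]
    exact le_refl _
  by_cases hbx : b = 0
  · have ha1 : a = 1 := by linarith
    subst hbx ha1
    simp only [EReal.coe_zero, zero_mul, EReal.coe_one, one_mul, zero_smul, one_smul, add_zero]
    exact le_refl _
  have ha' : 0 < a := lt_of_le_of_ne ha (Ne.symm hax)
  have hb' : 0 < b := lt_of_le_of_ne hb (Ne.symm hbx)
  by_cases hfx : f x = ⊤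
  · have hR1 : (a : EReal) * (f x - ((σ / 2 * ‖x‖ ^ 2 : ℝ) : EReal)) = ⊤ := by
      rw [hfx, EReal.top_sub_coe, EReal.coe_mul_top_of_pos ha']
    have hR2 : (b : EReal) * (f y - ((σ / 2 * ‖y‖ ^ 2 : ℝ) : EReal)) ≠ ⊥ :=
      SCaux_mul_ne_bot b hb' _ (SCaux_sub_coe_ne_bot _ (hfbot y) _)
    rw [hR1, EReal.top_add_of_ne_bot hR2]
    exact le_top
  by_cases hfy : f y = ⊤
  · have hR1 : (b : EReal) * (f y - ((σ / 2 * ‖y‖ ^ 2 : ℝ) : EReal)) = ⊤ := by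
      rw [hfy, EReal.top_sub_coe, EReal.coe_mul_top_of_pos hb']
    have hR2 : (a : EReal) * (f x - ((σ / 2 * ‖x‖ ^ 2 : ℝ) : EReal)) ≠ ⊥ :=
      SCaux_mul_ne_bot a ha' _ (SCaux_sub_coe_ne_bot _ (hfbot x) _)
    rw [hR1, EReal.add_top_of_ne_bot hR2]
    exact le_top
  -- main case
  have hfx_eq : f x = (((f x).toReal : ℝ) : EReal) := (EReal.coe_toReal hfx (hfbot x)).symm
  have hfy_eq : f y = (((f y).toReal : ℝ) : EReal) := (EReal.coe_toReal hfy (hfbot y)).symm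
  set m := a • x + b • y with hmdef
  clear_value m
  have hfm_le : f m ≤ ((a * (f x).toReal + b * (f y).toReal : ℝ) : EReal) := by
    have h := hfc x y a b ha hb hab
    rw [hfx_eq, hfy_eq, ← EReal.coe_mul, ← EReal.coe_mul, ← EReal.coe_add] at h
    rw [hmdef]
    exact h
  have hfm_ne_top : f m ≠ ⊤ := (lt_of_le_of_lt hfm_le (EReal.coe_lt_top _)).ne
  have hfm_eq : f m = (((f m).toReal : ℝ) : EReal) := (EReal.coe_toReal hfm_ne_top (hfbot m)).symm
  -- key real inequality
  have hkey : (f m).toReal + σ/2 * (a * b * ‖x - y‖^2) ≤ a * (f x).toReal + b * (f y).toReal := by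
    by_contra hcon
    push_neg at hcon
    set r : ℝ := a * (f x).toReal + b * (f y).toReal - σ/2 * (a * b * ‖x - y‖^2) with hrdef
    clear_value r
    have hrlt : (r : EReal) < f m := by
      rw [hfm_eq]
      have : r < (f m).toReal := by rw [hrdef]; linarith
      exact_mod_cast this
    obtain ⟨s₀, α, hmin, hram⟩ :=
      SCaux_exists_affine_minorant hfbot hflsc hfc hfm_ne_top hrlt
    set z := m + s₀ with hzdef
    have h1 := hsub z x hfx
    have h2 := hsub z y hfy
    set p := proxF z with hpdef
    clear_value z p
    have hcombo := SCaux_combo x y p a b hab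
    rw [← hmdef] at hcombo
    have hb1 : b = 1 - a := by linarith
    have hmp : m - p = a • (x - p) + b • (y - p) := by
      rw [hmdef, hb1]; module
    have hlin : ⟪z - p, m - p⟫ = a * ⟪z - p, x - p⟫ + b * ⟪z - p, y - p⟫ := by
      rw [hmp, inner_add_right, real_inner_smul_right, real_inner_smul_right]
    have hminor_p : α + ⟪s₀, p⟫ ≤ (f p).toReal := by
      have hh := hmin p
      have hfp_eq : f p = (((f p).toReal : ℝ) : EReal) := by rw [hpdef]; exact hFR z
      rw [hfp_eq] at hh
      exact EReal.coe_le_coe_iff.1 hh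
    have hA : r < (f p).toReal + ⟪z - p, m - p⟫ + σ/2 * ‖m - p‖^2 := by
      have hzp : z - p = (m - p) + s₀ := by rw [hzdef]; abel
      have hiexp : ⟪z - p, m - p⟫ = ‖m - p‖^2 + ⟪s₀, m - p⟫ := by
        rw [hzp, inner_add_left, real_inner_self_eq_norm_sq, real_inner_comm]
      have hsm : ⟪s₀, m - p⟫ = ⟪s₀, m⟫ - ⟪s₀, p⟫ := by rw [inner_sub_right]
      have hnn : 0 ≤ σ/2 * ‖m - p‖^2 := by positivity
      have hnn2 : 0 ≤ ‖m - p‖^2 := by positivity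
      rw [hiexp, hsm]
      linarith [hram, hminor_p]
    have hs1 := mul_le_mul_of_nonneg_left h1 ha'.le
    have hs2 := mul_le_mul_of_nonneg_left h2 hb'.le
    have hfr : a * (f p).toReal + b * (f p).toReal = (f p).toReal := by
      rw [← add_mul, hab, one_mul]
    have hcσ : σ/2 * (a * ‖x - p‖^2) + σ/2 * (b * ‖y - p‖^2)
        = σ/2 * ‖m - p‖^2 + σ/2 * (a * b * ‖x - y‖^2) := by
      linear_combination (σ/2) * hcombo
    have hrr : r = a * (f x).toReal + b * (f y).toReal - σ/2 * (a * b * ‖x - y‖^2) := hrdef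
    linarith [hs1, hs2, hA, hcσ, hlin, hfr, hrr]
  -- conclude in EReal
  have hgoal_real : (f m).toReal - σ/2 * ‖m‖^2
      ≤ a * ((f x).toReal - σ/2 * ‖x‖^2) + b * ((f y).toReal - σ/2 * ‖y‖^2) := by
    have hid := SCaux_combo x y 0 a b hab
    simp only [sub_zero] at hid
    rw [← hmdef] at hid
    have hmul : σ/2 * (a * ‖x‖^2 + b * ‖y‖^2) - σ/2 * ‖m‖^2 = σ/2 * (a * b * ‖x - y‖^2) := by
      linear_combination (σ/2) * hid
    linarith [hkey, hmul]
  rw [hfm_eq, hfx_eq, hfy_eq, ← EReal.coe_sub, ← EReal.coe_sub, ← EReal.coe_sub,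
    ← EReal.coe_mul, ← EReal.coe_mul, ← EReal.coe_add]
  exact EReal.coe_le_coe_iff.2 (by linarith [hgoal_real])
end SCauxiliary

theorem stronglyConvex_of_prox_scaled {n : ℕ}
    (f g : EuclideanSpace ℝ (Fin n) → EReal)
    (hfp : ProperFn f) (hflsc : LowerSemicontinuous f) (hfc : ConvexFn f)
    (hgp : ProperFn g) (hglsc : LowerSemicontinuous g) (hgc : ConvexFn g)
    (proxF proxG : EuclideanSpace ℝ (Fin n) → EuclideanSpace ℝ (Fin n))
    (hproxF : IsProxMap f proxF) (hproxG : IsProxMap g proxG)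
    (k : ℝ) (hk0 : 0 < k) (hk1 : k < 1)
    (hEq : ∀ x, proxF x = k • proxG x) :
    StronglyConvexFn f := by
  obtain ⟨σ, hσ, hconv⟩ := stronglyConvex_of_prox_scaled' f g hfp hflsc hfc hgp hglsc hgc
    proxF proxG hproxF hproxG k hk0 hk1 hEq
  exact ⟨σ, hσ, hconv⟩
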